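/- arXiv:1902.09606 — 5 statements merged into one kernel-verified Lean document; each statement's English description precedes it below -/
import Mathlib

section
/- Let C₀ > 0 and let H : ℝ → ℝ be twice differentiable with H''(p) ≥ 1/C₀ for all p ∈ ℝ. Then for all real numbers p₁, p₂ and all m₁, m₂ ≥ 0: (m₁ − m₂)·(H(p₁) − H(p₂)) − (p₁ − p₂)·(m₁·H'(p₁) − m₂·H'(p₂)) ≤ −(m₁ + m₂)·(p₁ − p₂)²/(2C₀). -/
/-- Strong convexity tangent-line estimate. -/
lemma strong_convex_tangent (C₀ : ℝ) (hC₀ : 0 < C₀) (H H' H'' : ℝ → ℝ)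
    (hH : ∀ p : ℝ, HasDerivAt H (H' p) p)
    (hH' : ∀ p : ℝ, HasDerivAt H' (H'' p) p)
    (hlb : ∀ p : ℝ, 1 / C₀ ≤ H'' p) (p q : ℝ) :
    H p + (q - p) * H' p + (q - p) ^ 2 / (2 * C₀) ≤ H q := by
  set g' : ℝ → ℝ := fun t => H' t - H' p - (t - p) / C₀ with hg'def
  set g : ℝ → ℝ := fun t => H t - H p - (t - p) * H' p - (t - p) ^ 2 / (2 * C₀) with hgdef
  have hgd : ∀ t : ℝ, HasDerivAt g (g' t) t := by
    intro t
    have h1 : HasDerivAt (fun t : ℝ => (t - p) * H' p) (H' p) t := by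
      simpa using ((hasDerivAt_id t).sub_const p).mul_const (H' p)
    have h2 : HasDerivAt (fun t : ℝ => (t - p) ^ 2 / (2 * C₀)) ((t - p) / C₀) t := by
      have := (((hasDerivAt_id t).sub_const p).pow 2).div_const (2 * C₀)
      exact this.congr_deriv (by simp only [id]; field_simp; ring)
    simpa [hgdef, hg'def, Pi.sub_def] using (((hH t).sub_const (H p)).sub h1).sub h2
  have hg'd : ∀ t : ℝ, HasDerivAt g' (H'' t - 1 / C₀) t := by
    intro t
    have h2 : HasDerivAt (fun t : ℝ => (t - p) / C₀) (1 / C₀) t := by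
      simpa using ((hasDerivAt_id t).sub_const p).div_const C₀
    simpa [hg'def, Pi.sub_def] using ((hH' t).sub_const (H' p)).sub h2
  have hg'mono : Monotone g' := by
    apply monotone_of_deriv_nonneg (fun t => (hg'd t).differentiableAt)
    intro t
    rw [(hg'd t).deriv]
    have := hlb t
    linarith
  have hg'p : g' p = 0 := by simp [hg'def]
  have hgoal : 0 ≤ g q := by
    rcases le_total p q with h | h
    · have hmono : MonotoneOn g (Set.Ici p) := by
        apply monotoneOn_of_deriv_nonneg (convex_Ici p)
          (fun t _ => (hgd t).differentiableAt.continuousAt.continuousWithinAt)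
          (fun t _ => (hgd t).differentiableAt.differentiableWithinAt)
        intro t ht
        rw [(hgd t).deriv]
        rw [interior_Ici] at ht
        have : g' p ≤ g' t := hg'mono (le_of_lt ht)
        linarith [hg'p ▸ this]
      have : g p ≤ g q := hmono (Set.self_mem_Ici) h h
      simpa [hgdef] using this
    · have hanti : AntitoneOn g (Set.Iic p) := by
        apply antitoneOn_of_deriv_nonpos (convex_Iic p)
          (fun t _ => (hgd t).differentiableAt.continuousAt.continuousWithinAt)
          (fun t _ => (hgd t).differentiableAt.differentiableWithinAt)
        intro t ht
        rw [(hgd t).deriv]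
        rw [interior_Iic] at ht
        have : g' t ≤ g' p := hg'mono (le_of_lt ht)
        linarith [hg'p ▸ this]
      have : g p ≤ g q := hanti (Set.mem_Iic.2 h) (Set.self_mem_Iic) h
      simpa [hgdef] using this
  simp only [hgdef] at hgoal
  linarith

/-- **Lasry–Lions monotonicity estimate.** If `H : ℝ → ℝ` is twice differentiable with
`H'' ≥ 1/C₀` everywhere, then for all `p₁ p₂ : ℝ` and all `m₁, m₂ ≥ 0`,
`(m₁ − m₂)(H p₁ − H p₂) − (p₁ − p₂)(m₁ H' p₁ − m₂ H' p₂) ≤ −(m₁ + m₂)(p₁ − p₂)²/(2C₀)`. -/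
theorem stmt_1 (C₀ : ℝ) (hC₀ : 0 < C₀) (H H' H'' : ℝ → ℝ)
    (hH : ∀ p : ℝ, HasDerivAt H (H' p) p)
    (hH' : ∀ p : ℝ, HasDerivAt H' (H'' p) p)
    (hlb : ∀ p : ℝ, 1 / C₀ ≤ H'' p) :
    ∀ p₁ p₂ m₁ m₂ : ℝ, 0 ≤ m₁ → 0 ≤ m₂ →
      (m₁ - m₂) * (H p₁ - H p₂) - (p₁ - p₂) * (m₁ * H' p₁ - m₂ * H' p₂) ≤
        -((m₁ + m₂) * (p₁ - p₂) ^ 2 / (2 * C₀)) := by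
  intro p₁ p₂ m₁ m₂ hm₁ hm₂
  have h1 := strong_convex_tangent C₀ hC₀ H H' H'' hH hH' hlb p₁ p₂
  have h2 := strong_convex_tangent C₀ hC₀ H H' H'' hH hH' hlb p₂ p₁
  -- bracket A = H p₁ - H p₂ - (p₁-p₂) H' p₁ ≤ -(p₁-p₂)^2/(2C₀) from h2
  have hsq : (p₂ - p₁) ^ 2 = (p₁ - p₂) ^ 2 := by ring
  rw [hsq] at h1
  have hA : H p₁ - H p₂ - (p₁ - p₂) * H' p₁ ≤ -((p₁ - p₂) ^ 2 / (2 * C₀)) := by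
    linarith
  have hB : H p₂ - H p₁ - (p₂ - p₁) * H' p₂ ≤ -((p₁ - p₂) ^ 2 / (2 * C₀)) := by
    linarith
  have hMA := mul_le_mul_of_nonneg_left hA hm₁
  have hMB := mul_le_mul_of_nonneg_left hB hm₂
  have heq : -((m₁ + m₂) * (p₁ - p₂) ^ 2 / (2 * C₀)) =
      m₁ * -((p₁ - p₂) ^ 2 / (2 * C₀)) + m₂ * -((p₁ - p₂) ^ 2 / (2 * C₀)) := by ring
  have hlhs : (m₁ - m₂) * (H p₁ - H p₂) - (p₁ - p₂) * (m₁ * H' p₁ - m₂ * H' p₂) =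
      m₁ * (H p₁ - H p₂ - (p₁ - p₂) * H' p₁) + m₂ * (H p₂ - H p₁ - (p₂ - p₁) * H' p₂) := by ring
  rw [heq, hlhs]
  linarith
end

section
/- Let T > 0, γ ≥ 0, let V be a d×d real diagonal matrix with positive diagonal entries, Σ a d×d real symmetric positive semidefinite matrix, and A a d×d real symmetric positive semidefinite matrix. Then there exists exactly one continuously differentiable matrix-valued function H : [0,T] → M_d(ℝ), defined on all of [0,T], such that H'(t) = −2·H(t)·V·H(t) + γ·Σ for every t ∈ [0,T] and H(T) = −2A; moreover H(t) is symmetric for every t ∈ [0,T]. -/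
open Matrix Set

/-- `H` solves (entrywise, with derivatives taken within `[0,T]`) the terminal value
problem `H' = −2·H·V·H + γ·Σ` on `[0,T]`, `H T = −2A`. -/
def IsRiccatiSol (d : ℕ) (T γ : ℝ) (V S A : Matrix (Fin d) (Fin d) ℝ)
    (H : ℝ → Matrix (Fin d) (Fin d) ℝ) : Prop :=
  (∀ t ∈ Set.Icc (0 : ℝ) T, ∀ i j,
      HasDerivWithinAt (fun s => H s i j)
        (((-2 : ℝ) • (H t * V * H t) + γ • S) i j) (Set.Icc (0 : ℝ) T) t) ∧
  H T = (-2 : ℝ) • A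

section RiccatiExistence

attribute [local instance] Matrix.linftyOpNormedRing Matrix.linftyOpNormedAlgebra

variable {n : Type*} [Fintype n] [DecidableEq n]

/-- entry evaluation as a continuous linear map -/
private noncomputable def eCLM (i j : n) : Matrix n n ℝ →L[ℝ] ℝ :=
  LinearMap.toContinuousLinearMap
    { toFun := fun m => m i j, map_add' := fun _ _ => rfl, map_smul' := fun _ _ => rfl }

@[simp] private lemma eCLM_apply (i j : n) (m : Matrix n n ℝ) : eCLM i j m = m i j := rfl

private noncomputable def trCLM : Matrix n n ℝ →L[ℝ] Matrix n n ℝ :=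
  LinearMap.toContinuousLinearMap
    { toFun := fun m => mᵀ, map_add' := fun _ _ => rfl, map_smul' := fun _ _ => rfl }

@[simp] private lemma trCLM_apply (m : Matrix n n ℝ) : trCLM m = mᵀ := rfl

variable {d : ℕ}

private noncomputable def b11CLM (d : ℕ) :
    Matrix (Fin d ⊕ Fin d) (Fin d ⊕ Fin d) ℝ →L[ℝ] Matrix (Fin d) (Fin d) ℝ :=
  LinearMap.toContinuousLinearMap
    { toFun := Matrix.toBlocks₁₁, map_add' := fun _ _ => rfl, map_smul' := fun _ _ => rfl }

@[simp] private lemma b11CLM_apply (m : Matrix (Fin d ⊕ Fin d) (Fin d ⊕ Fin d) ℝ) :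
    b11CLM d m = m.toBlocks₁₁ := rfl

private noncomputable def b21CLM (d : ℕ) :
    Matrix (Fin d ⊕ Fin d) (Fin d ⊕ Fin d) ℝ →L[ℝ] Matrix (Fin d) (Fin d) ℝ :=
  LinearMap.toContinuousLinearMap
    { toFun := Matrix.toBlocks₂₁, map_add' := fun _ _ => rfl, map_smul' := fun _ _ => rfl }

@[simp] private lemma b21CLM_apply (m : Matrix (Fin d ⊕ Fin d) (Fin d ⊕ Fin d) ℝ) :
    b21CLM d m = m.toBlocks₂₁ := rfl

private theorem exists_riccati (d : ℕ) (T γ : ℝ) (hT : 0 < T) (hγ : 0 ≤ γ)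
    (v : Fin d → ℝ) (hv : ∀ i, 0 < v i)
    (S A : Matrix (Fin d) (Fin d) ℝ) (hS : S.PosSemidef) (hA : A.PosSemidef) :
    ∃ H : ℝ → Matrix (Fin d) (Fin d) ℝ,
      IsRiccatiSol d T γ (Matrix.diagonal v) S A H ∧
      ∀ t ∈ Set.Icc (0 : ℝ) T, (H t).IsSymm := by
  classical
  set W : Matrix (Fin d) (Fin d) ℝ := (2 : ℝ) • Matrix.diagonal v with hWdef
  set Q : Matrix (Fin d) (Fin d) ℝ := γ • S with hQdef
  set B : Matrix (Fin d) (Fin d) ℝ := (-2 : ℝ) • A with hBdef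
  set L : Matrix (Fin d ⊕ Fin d) (Fin d ⊕ Fin d) ℝ := Matrix.fromBlocks 0 W Q 0 with hLdef
  set Z : ℝ → Matrix (Fin d ⊕ Fin d) (Fin d ⊕ Fin d) ℝ :=
    fun t => NormedSpace.exp ((t - T) • L) * Matrix.fromBlocks 1 0 B 0 with hZdef
  set X : ℝ → Matrix (Fin d) (Fin d) ℝ := fun t => (Z t).toBlocks₁₁ with hXdef
  set Y : ℝ → Matrix (Fin d) (Fin d) ℝ := fun t => (Z t).toBlocks₂₁ with hYdef
  have hWsymm : Wᵀ = W := by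
    rw [hWdef, Matrix.transpose_smul, Matrix.diagonal_transpose]
  have hSsymm : Sᵀ = S := by
    have := hS.1; rwa [Matrix.IsHermitian, Matrix.conjTranspose_eq_transpose_of_trivial] at this
  have hAsymm : Aᵀ = A := by
    have := hA.1; rwa [Matrix.IsHermitian, Matrix.conjTranspose_eq_transpose_of_trivial] at this
  have hQsymm : Qᵀ = Q := by rw [hQdef, Matrix.transpose_smul, hSsymm]
  have hBsymm : Bᵀ = B := by rw [hBdef, Matrix.transpose_smul, hAsymm]
  -- value at `T`
  have hZT : Z T = Matrix.fromBlocks 1 0 B 0 := by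
    rw [hZdef]; simp [NormedSpace.exp_zero]
  have hXT : X T = 1 := by
    show (Z T).toBlocks₁₁ = 1
    rw [hZT]; simp [Matrix.toBlocks_fromBlocks₁₁]
  have hYT : Y T = B := by
    show (Z T).toBlocks₂₁ = B
    rw [hZT]; simp [Matrix.toBlocks_fromBlocks₂₁]
  -- derivative of `Z`
  have hZ' : ∀ t, HasDerivAt Z (L * Z t) t := by
    intro t
    have h1 : HasDerivAt (fun s : ℝ => s - T) 1 t := (hasDerivAt_id t).sub_const T
    have h2 := hasDerivAt_exp_smul_const' (𝕂 := ℝ) L (t - T)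
    have h3 := (h2.scomp t h1).mul_const (Matrix.fromBlocks 1 0 B 0)
    simp [hZdef, mul_assoc] at h3 ⊢; exact h3
  have hLZ : ∀ t, L * Z t =
      Matrix.fromBlocks (W * Y t) (W * (Z t).toBlocks₂₂) (Q * X t) (Q * (Z t).toBlocks₁₂) := by
    intro t
    conv_lhs => rw [← Matrix.fromBlocks_toBlocks (Z t)]
    rw [hLdef, Matrix.fromBlocks_multiply]
    simp [hXdef, hYdef]
  -- derivatives of the blocks
  have hX' : ∀ t, HasDerivAt X (W * Y t) t := by
    intro t
    have h := (b11CLM d).hasFDerivAt.comp_hasDerivAt t (hZ' t)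
    simp only [hXdef, hLZ t, b11CLM_apply, Function.comp_def, Matrix.toBlocks_fromBlocks₁₁] at h ⊢; exact h
  have hY' : ∀ t, HasDerivAt Y (Q * X t) t := by
    intro t
    have h := (b21CLM d).hasFDerivAt.comp_hasDerivAt t (hZ' t)
    simp only [hYdef, hLZ t, b21CLM_apply, Function.comp_def, Matrix.toBlocks_fromBlocks₂₁] at h ⊢; exact h
  have hXe : ∀ t i j, HasDerivAt (fun s => X s i j) ((W * Y t) i j) t := by
    intro t i j
    exact (eCLM i j).hasFDerivAt.comp_hasDerivAt t (hX' t)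
  -- invertibility of `X t` for `t ≤ T`
  have hXu : ∀ t₀, t₀ ≤ T → IsUnit (X t₀) := by
    intro t₀ ht₀
    rw [Matrix.isUnit_iff_isUnit_det, isUnit_iff_ne_zero]
    intro hdet
    obtain ⟨x, hx0, hx⟩ := Matrix.exists_mulVec_eq_zero_iff.2 hdet
    apply hx0
    rcases eq_or_lt_of_le ht₀ with rfl | htlt
    · rw [hXT, Matrix.one_mulVec] at hx; exact hx
    set u : ℝ → Fin d → ℝ := fun s => X s *ᵥ x with hudef
    set w : ℝ → Fin d → ℝ := fun s => Y s *ᵥ x with hwdef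
    have hu' : ∀ s i, HasDerivAt (fun r => u r i) ((W *ᵥ w s) i) s := by
      intro s i
      have h : HasDerivAt (fun r => ∑ j, X r i j * x j) (∑ j, (W * Y s) i j * x j) s :=
        HasDerivAt.fun_sum fun j _ => (hXe s i j).mul_const (x j)
      have h2 : (∑ j, (W * Y s) i j * x j) = (W *ᵥ w s) i := by
        show _ = (W *ᵥ (Y s *ᵥ x)) i
        rw [Matrix.mulVec_mulVec]
        simp [Matrix.mulVec, dotProduct]
      rw [h2] at h
      exact h
    have hw' : ∀ s i, HasDerivAt (fun r => w r i) ((Q *ᵥ u s) i) s := by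
      intro s i
      have hYe : ∀ j, HasDerivAt (fun r => Y r i j) ((Q * X s) i j) s :=
        fun j => (eCLM i j).hasFDerivAt.comp_hasDerivAt s (hY' s)
      have h : HasDerivAt (fun r => ∑ j, Y r i j * x j) (∑ j, (Q * X s) i j * x j) s :=
        HasDerivAt.fun_sum fun j _ => (hYe j).mul_const (x j)
      have h2 : (∑ j, (Q * X s) i j * x j) = (Q *ᵥ u s) i := by
        show _ = (Q *ᵥ (X s *ᵥ x)) i
        rw [Matrix.mulVec_mulVec]
        simp [Matrix.mulVec, dotProduct]
      rw [h2] at h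
      exact h
    set f : ℝ → ℝ := fun s => ∑ i, w s i * u s i with hfdef
    set g : ℝ → ℝ := fun s => γ * (u s ⬝ᵥ S *ᵥ u s) + ∑ i, 2 * v i * (w s i) ^ 2 with hgdef
    have hval : ∀ s, (∑ i, ((Q *ᵥ u s) i * u s i + w s i * (W *ᵥ w s) i)) = g s := by
      intro s
      rw [Finset.sum_add_distrib, hgdef]
      congr 1
      · show ∑ i, (Q *ᵥ u s) i * u s i = γ * (u s ⬝ᵥ S *ᵥ u s)
        rw [hQdef, Matrix.smul_mulVec, dotProduct_comm, dotProduct,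
          Finset.mul_sum]
        exact Finset.sum_congr rfl fun i _ => by simp [mul_assoc]
      · refine Finset.sum_congr rfl fun i _ => ?_
        have : (W *ᵥ w s) i = 2 * (v i * w s i) := by
          rw [hWdef, Matrix.smul_mulVec]
          simp [Matrix.mulVec_diagonal]
        rw [this]; ring
    have hf' : ∀ s, HasDerivAt f (g s) s := by
      intro s
      have h : HasDerivAt f (∑ i, ((Q *ᵥ u s) i * u s i + w s i * (W *ᵥ w s) i)) s :=
        HasDerivAt.fun_sum fun i _ => (hw' s i).mul (hu' s i)
      rwa [hval s] at h
    have hg_nonneg : ∀ s, 0 ≤ g s := by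
      intro s
      have h1 : 0 ≤ u s ⬝ᵥ S *ᵥ u s := by simpa using hS.dotProduct_mulVec_nonneg (u s)
      have h2 : 0 ≤ ∑ i, 2 * v i * (w s i) ^ 2 :=
        Finset.sum_nonneg fun i _ =>
          mul_nonneg (mul_nonneg (by norm_num) (hv i).le) (sq_nonneg _)
      show (0:ℝ) ≤ γ * (u s ⬝ᵥ S *ᵥ u s) + ∑ i, 2 * v i * (w s i) ^ 2
      have := mul_nonneg hγ h1
      linarith
    have hmono : Monotone f :=
      monotone_of_deriv_nonneg (fun s => (hf' s).differentiableAt)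
        (fun s => by rw [(hf' s).deriv]; exact hg_nonneg s)
    have hfT : f T ≤ 0 := by
      have hxAx : 0 ≤ x ⬝ᵥ A *ᵥ x := by simpa using hA.dotProduct_mulVec_nonneg x
      have hfTd : f T = w T ⬝ᵥ u T := by
        show ∑ i, w T i * u T i = _
        simp [dotProduct]
      rw [hfTd]
      have huT : u T = x := by rw [hudef]; show X T *ᵥ x = x; rw [hXT, Matrix.one_mulVec]
      have hwT : w T = (-2 : ℝ) • (A *ᵥ x) := by
        rw [hwdef]; show Y T *ᵥ x = _; rw [hYT, hBdef, Matrix.smul_mulVec]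
      rw [huT, hwT, smul_dotProduct, dotProduct_comm]
      simp only [smul_eq_mul]
      nlinarith
    have hft₀ : f t₀ = 0 := by
      have hu0 : u t₀ = 0 := hx
      show ∑ i, w t₀ i * u t₀ i = 0
      simp [hu0]
    have hf0 : ∀ s ∈ Set.Icc t₀ T, f s = 0 := by
      intro s hs
      have h1 : f s ≤ 0 := le_trans (hmono hs.2) hfT
      have h2 : 0 ≤ f s := hft₀ ▸ hmono hs.1
      linarith
    have hw0 : ∀ s ∈ Set.Ioo t₀ T, w s = 0 := by
      intro s hs
      have hder0 : HasDerivAt f 0 s := by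
        have hmem : Set.Ioo t₀ T ∈ nhds s := (isOpen_Ioo).mem_nhds hs
        have heq : f =ᶠ[nhds s] fun _ => 0 :=
          Filter.eventually_of_mem hmem fun r hr => hf0 r (Set.Ioo_subset_Icc_self hr)
        exact (hasDerivAt_const s (0 : ℝ)).congr_of_eventuallyEq heq
      have hzero : g s = 0 := ((hf' s).unique hder0)
      have h1 : 0 ≤ γ * (u s ⬝ᵥ S *ᵥ u s) :=
        mul_nonneg hγ (by simpa using hS.dotProduct_mulVec_nonneg (u s))
      have h2 : 0 ≤ ∑ i, 2 * v i * (w s i) ^ 2 :=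
        Finset.sum_nonneg fun i _ =>
          mul_nonneg (mul_nonneg (by norm_num) (hv i).le) (sq_nonneg _)
      have hsum0 : ∑ i, 2 * v i * (w s i) ^ 2 = 0 := by
        have hzero' : γ * (u s ⬝ᵥ S *ᵥ u s) + ∑ i, 2 * v i * (w s i) ^ 2 = 0 := hzero
        linarith
      funext i
      have := (Finset.sum_eq_zero_iff_of_nonneg
        (fun i _ => mul_nonneg (mul_nonneg (by norm_num) (hv i).le) (sq_nonneg _) :
          ∀ i ∈ Finset.univ, (0:ℝ) ≤ 2 * v i * (w s i) ^ 2)).1 hsum0 i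
        (Finset.mem_univ i)
      have hvi := hv i
      show w s i = 0
      rcases mul_eq_zero.mp this with h | h
      · exfalso; nlinarith
      · exact pow_eq_zero_iff (by norm_num : (2:ℕ) ≠ 0) |>.mp h
    have hux : ∀ s ∈ Set.Ioo t₀ T, ∀ i, x i = u s i := by
      intro s hs i
      have hcont : ContinuousOn (fun r => u r i) (Set.Icc s T) :=
        fun r _ => ((hu' r i).continuousAt).continuousWithinAt
      have hder : ∀ r ∈ Set.Ico s T, HasDerivWithinAt (fun r => u r i) 0 (Set.Ici r) r := by
        intro r hr
        have hwr : w r = 0 := hw0 r ⟨lt_of_lt_of_le hs.1 hr.1, hr.2⟩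
        have := (hu' r i).hasDerivWithinAt (s := Set.Ici r)
        rwa [hwr, Matrix.mulVec_zero] at this
      have := constant_of_has_deriv_right_zero hcont hder T ⟨le_of_lt hs.2, le_rfl⟩
      have huT : u T = x := by rw [hudef]; show X T *ᵥ x = x; rw [hXT, Matrix.one_mulVec]
      rw [huT] at this
      exact this
    funext i
    have hc : Filter.Tendsto (fun s => u s i) (nhdsWithin t₀ (Set.Ioi t₀)) (nhds (u t₀ i)) :=
      ((hu' t₀ i).continuousAt.tendsto).mono_left nhdsWithin_le_nhds
    have he : (fun s => u s i) =ᶠ[nhdsWithin t₀ (Set.Ioi t₀)] fun _ => x i :=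
      Filter.eventually_of_mem (Ioo_mem_nhdsGT_of_mem ⟨le_rfl, htlt⟩)
        fun s hs => (hux s hs i).symm
    have hc2 : Filter.Tendsto (fun s => u s i) (nhdsWithin t₀ (Set.Ioi t₀)) (nhds (x i)) :=
      Filter.Tendsto.congr' he.symm tendsto_const_nhds
    have hxi : u t₀ i = x i := tendsto_nhds_unique hc hc2
    have hu0i : u t₀ i = 0 := by show (X t₀ *ᵥ x) i = 0; rw [hx]; rfl
    show x i = 0
    rw [← hxi, hu0i]
  -- symmetry relation
  have hsymXY : ∀ s, (X s)ᵀ * Y s = (Y s)ᵀ * X s := by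
    have hXt' : ∀ s, HasDerivAt (fun r => (X r)ᵀ) ((W * Y s)ᵀ) s := by
      intro s
      have h := (trCLM (n := Fin d)).hasFDerivAt.comp_hasDerivAt s (hX' s)
      exact h
    have hYt' : ∀ s, HasDerivAt (fun r => (Y r)ᵀ) ((Q * X s)ᵀ) s := by
      intro s
      have h := (trCLM (n := Fin d)).hasFDerivAt.comp_hasDerivAt s (hY' s)
      exact h
    set K : ℝ → Matrix (Fin d) (Fin d) ℝ := fun s => (X s)ᵀ * Y s - (Y s)ᵀ * X s with hKdef
    have hK' : ∀ s, HasDerivAt K 0 s := by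
      intro s
      have h := (((hXt' s).mul (hY' s)).sub ((hYt' s).mul (hX' s)))
      have hval : (W * Y s)ᵀ * Y s + (X s)ᵀ * (Q * X s) -
          ((Q * X s)ᵀ * X s + (Y s)ᵀ * (W * Y s)) = 0 := by
        rw [Matrix.transpose_mul, Matrix.transpose_mul, hWsymm, hQsymm]
        noncomm_ring
      rwa [hval] at h
    have hKconst : ∀ s, K s = K T := by
      intro s
      exact is_const_of_deriv_eq_zero (fun r => (hK' r).differentiableAt)
        (fun r => (hK' r).deriv) s T
    intro s
    have hKT : K T = 0 := by
      show (X T)ᵀ * Y T - (Y T)ᵀ * X T = 0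
      rw [hXT, hYT, Matrix.transpose_one, hBsymm]
      simp
    have := hKconst s
    rw [hKT] at this
    have h2 : (X s)ᵀ * Y s - (Y s)ᵀ * X s = 0 := this
    exact sub_eq_zero.mp h2
  -- the candidate solution
  set H : ℝ → Matrix (Fin d) (Fin d) ℝ := fun t => Y t * (X t)⁻¹ with hHdef
  have hHT : H T = (-2 : ℝ) • A := by
    show Y T * (X T)⁻¹ = (-2 : ℝ) • A
    rw [hXT, hYT, Matrix.nonsing_inv_eq_ringInverse, Ring.inverse_one, mul_one, hBdef]
  -- derivative of H
  have hH' : ∀ t, t ≤ T → HasDerivAt H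
      ((-2 : ℝ) • (H t * Matrix.diagonal v * H t) + γ • S) t := by
    intro t ht
    have hu := hXu t ht
    have hdet : IsUnit (X t).det := (Matrix.isUnit_iff_isUnit_det _).1 hu
    have hinv0 : HasDerivAt (fun s => Ring.inverse (X s))
        ((-(ContinuousLinearMap.mulLeftRight ℝ _ ((hu.unit⁻¹ : _) : Matrix (Fin d) (Fin d) ℝ)
          ((hu.unit⁻¹ : _) : Matrix (Fin d) (Fin d) ℝ))) (W * Y t)) t := by
      have hfd := hasFDerivAt_ringInverse (𝕜 := ℝ) hu.unit
      rw [hu.unit_spec] at hfd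
      exact hfd.comp_hasDerivAt t (hX' t)
    have hcoe : ((hu.unit⁻¹ : _) : Matrix (Fin d) (Fin d) ℝ) = (X t)⁻¹ := by
      rw [← Ring.inverse_unit hu.unit, hu.unit_spec, Matrix.nonsing_inv_eq_ringInverse]
    have hinv : HasDerivAt (fun s => (X s)⁻¹) (-((X t)⁻¹ * (W * Y t) * (X t)⁻¹)) t := by
      have heq : (fun s => Ring.inverse (X s)) = fun s => (X s)⁻¹ := by
        funext s; rw [Matrix.nonsing_inv_eq_ringInverse]
      rw [heq] at hinv0
      convert hinv0 using 1
      rw [hcoe]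
      simp [ContinuousLinearMap.mulLeftRight_apply]
    have hprod := (hY' t).mul hinv
    have hval : (Q * X t) * (X t)⁻¹ + Y t * -((X t)⁻¹ * (W * Y t) * (X t)⁻¹) =
        (-2 : ℝ) • (H t * Matrix.diagonal v * H t) + γ • S := by
      have h1 : (Q * X t) * (X t)⁻¹ = Q := by
        rw [mul_assoc, Matrix.mul_nonsing_inv _ hdet, mul_one]
      have h2 : Y t * -((X t)⁻¹ * (W * Y t) * (X t)⁻¹) =
          (-2 : ℝ) • (H t * Matrix.diagonal v * H t) := by
        show _ = (-2 : ℝ) • (Y t * (X t)⁻¹ * Matrix.diagonal v * (Y t * (X t)⁻¹))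
        rw [hWdef]
        simp only [Matrix.smul_mul, Matrix.mul_smul, mul_neg, mul_assoc]
        rw [← neg_smul]
      rw [h1, h2, add_comm]
    rw [hval] at hprod
    exact hprod
  refine ⟨H, ⟨?_, hHT⟩, ?_⟩
  · intro t ht i j
    have h := (eCLM i j).hasFDerivAt.comp_hasDerivAt t (hH' t ht.2)
    exact h.hasDerivWithinAt
  · intro t ht
    have hu := hXu t ht.2
    have hdet : IsUnit (X t).det := (Matrix.isUnit_iff_isUnit_det _).1 hu
    have hdetT : IsUnit ((X t)ᵀ).det := by rwa [Matrix.det_transpose]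
    show (H t)ᵀ = H t
    show (Y t * (X t)⁻¹)ᵀ = Y t * (X t)⁻¹
    rw [Matrix.transpose_mul, Matrix.transpose_nonsing_inv]
    have hYt : (Y t)ᵀ = (X t)ᵀ * (Y t * (X t)⁻¹) := by
      have h0 : (Y t)ᵀ = (Y t)ᵀ * (X t * (X t)⁻¹) := by
        rw [Matrix.mul_nonsing_inv _ hdet, mul_one]
      rw [h0, ← mul_assoc, ← hsymXY t, mul_assoc]
    rw [hYt, ← mul_assoc, Matrix.nonsing_inv_mul _ hdetT, one_mul]

end RiccatiExistence

section RiccatiUnique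

private theorem riccati_unique (d : ℕ) (T γ : ℝ) (hT : 0 < T)
    (v : Fin d → ℝ) (hv : ∀ i, 0 < v i) (S A : Matrix (Fin d) (Fin d) ℝ)
    (H₁ H₂ : ℝ → Matrix (Fin d) (Fin d) ℝ)
    (h₁ : IsRiccatiSol d T γ (Matrix.diagonal v) S A H₁)
    (h₂ : IsRiccatiSol d T γ (Matrix.diagonal v) S A H₂) :
    Set.EqOn H₁ H₂ (Set.Icc (0 : ℝ) T) := by
  classical
  set F : (Fin d → Fin d → ℝ) → (Fin d → Fin d → ℝ) :=
    fun y i j => -2 * (∑ k, y i k * v k * y k j) + γ * S i j with hFdef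
  have hFentry : ∀ (M : Matrix (Fin d) (Fin d) ℝ) (i j : Fin d),
      ((-2 : ℝ) • (M * Matrix.diagonal v * M) + γ • S) i j = F (fun i j => M i j) i j := by
    intro M i j
    show ((-2 : ℝ) • (M * Matrix.diagonal v * M) + γ • S) i j
      = -2 * (∑ k, M i k * v k * M k j) + γ * S i j
    rw [Matrix.add_apply, Matrix.smul_apply, Matrix.smul_apply, smul_eq_mul, smul_eq_mul]
    congr 2
    rw [Matrix.mul_apply]
    exact Finset.sum_congr rfl fun k _ => by rw [Matrix.mul_diagonal]
  have sol : ∀ (H : ℝ → Matrix (Fin d) (Fin d) ℝ),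
      IsRiccatiSol d T γ (Matrix.diagonal v) S A H →
      ∀ t ∈ Set.Icc (0 : ℝ) T, HasDerivWithinAt (fun s (i j : Fin d) => H s i j)
        (F (fun i j => H t i j)) (Set.Icc (0 : ℝ) T) t := by
    intro H hH t ht
    rw [hasDerivWithinAt_pi]
    intro i
    rw [hasDerivWithinAt_pi]
    intro j
    have h := hH.1 t ht i j
    rwa [hFentry (H t) i j] at h
  have cont : ∀ (H : ℝ → Matrix (Fin d) (Fin d) ℝ),
      IsRiccatiSol d T γ (Matrix.diagonal v) S A H →
      ContinuousOn (fun s (i j : Fin d) => H s i j) (Set.Icc (0 : ℝ) T) := by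
    intro H hH t ht
    apply continuousWithinAt_pi.2
    intro i
    apply continuousWithinAt_pi.2
    intro j
    exact (hH.1 t ht i j).continuousWithinAt
  obtain ⟨C₁, hC₁⟩ := (isCompact_Icc).exists_bound_of_continuousOn (cont H₁ h₁)
  obtain ⟨C₂, hC₂⟩ := (isCompact_Icc).exists_bound_of_continuousOn (cont H₂ h₂)
  set R : ℝ := max C₁ C₂ with hRdef
  have hR0 : 0 ≤ R :=
    le_trans (le_trans (norm_nonneg _) (hC₁ 0 ⟨le_rfl, hT.le⟩)) (le_max_left _ _)
  have hvsum : 0 ≤ ∑ k, v k := Finset.sum_nonneg fun k _ => (hv k).le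
  set Kr : ℝ := 4 * (∑ k, v k) * R with hKrdef
  have hKr0 : 0 ≤ Kr := by
    rw [hKrdef]; positivity
  have hbd : ∀ (a : Fin d → Fin d → ℝ) (i j : Fin d), |a i j| ≤ ‖a‖ := by
    intro a i j
    calc |a i j| = ‖a i j‖ := (Real.norm_eq_abs _).symm
    _ ≤ ‖a i‖ := norm_le_pi_norm (a i) j
    _ ≤ ‖a‖ := norm_le_pi_norm a i
  have hlip : LipschitzOnWith Kr.toNNReal F (Metric.closedBall 0 R) := by
    apply LipschitzOnWith.of_dist_le_mul
    intro y hy z hz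
    rw [dist_eq_norm, dist_eq_norm]
    refine le_trans ?_ (mul_le_mul_of_nonneg_right (Real.le_coe_toNNReal Kr) (norm_nonneg _))
    have hyR : ‖y‖ ≤ R := mem_closedBall_zero_iff.1 hy
    have hzR : ‖z‖ ≤ R := mem_closedBall_zero_iff.1 hz
    set D : ℝ := ‖y - z‖ with hDdef
    have hD0 : 0 ≤ D := norm_nonneg _
    rw [pi_norm_le_iff_of_nonneg (mul_nonneg hKr0 hD0)]
    intro i
    rw [pi_norm_le_iff_of_nonneg (mul_nonneg hKr0 hD0)]
    intro j
    have hdiff : F y i j - F z i j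
        = -2 * ∑ k, (y i k * v k * y k j - z i k * v k * z k j) := by
      show (-2 * (∑ k, y i k * v k * y k j) + γ * S i j)
        - (-2 * (∑ k, z i k * v k * z k j) + γ * S i j) = _
      rw [Finset.sum_sub_distrib]
      ring
    have hterm : ∀ k, |y i k * v k * y k j - z i k * v k * z k j| ≤ v k * (2 * R * D) := by
      intro k
      have e1 : y i k * v k * y k j - z i k * v k * z k j
          = v k * (y i k * y k j - z i k * z k j) := by ring
      rw [e1, abs_mul, abs_of_nonneg (hv k).le]
      have e2 : y i k * y k j - z i k * z k j
          = y i k * (y k j - z k j) + (y i k - z i k) * z k j := by ring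
      have h1 : |y i k| ≤ R := le_trans (hbd y i k) hyR
      have h2 : |z k j| ≤ R := le_trans (hbd z k j) hzR
      have h3 : |y k j - z k j| ≤ D := by
        have := hbd (y - z) k j
        simpa [hDdef] using this
      have h4 : |y i k - z i k| ≤ D := by
        have := hbd (y - z) i k
        simpa [hDdef] using this
      have h5 : |y i k * y k j - z i k * z k j| ≤ 2 * R * D := by
        rw [e2]
        calc |y i k * (y k j - z k j) + (y i k - z i k) * z k j|
            ≤ |y i k * (y k j - z k j)| + |(y i k - z i k) * z k j| := abs_add_le _ _
        _ = |y i k| * |y k j - z k j| + |y i k - z i k| * |z k j| := by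
            rw [abs_mul, abs_mul]
        _ ≤ R * D + D * R := by
            have hy0 : (0:ℝ) ≤ |y i k| := abs_nonneg _
            have hz0 : (0:ℝ) ≤ |y i k - z i k| := abs_nonneg _
            have := mul_le_mul h1 h3 (abs_nonneg _) hR0
            have := mul_le_mul h4 h2 (abs_nonneg _) hD0
            nlinarith [abs_nonneg (y k j - z k j), abs_nonneg (y i k - z i k)]
        _ = 2 * R * D := by ring
      exact mul_le_mul_of_nonneg_left h5 (hv k).le
    show ‖F y i j - F z i j‖ ≤ Kr * D
    rw [Real.norm_eq_abs, hdiff, abs_mul]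
    calc |(-2 : ℝ)| * |∑ k, (y i k * v k * y k j - z i k * v k * z k j)|
        ≤ 2 * ∑ k, |y i k * v k * y k j - z i k * v k * z k j| := by
          rw [abs_neg, abs_two]
          exact mul_le_mul_of_nonneg_left
            (Finset.abs_sum_le_sum_abs _ _) (by norm_num)
    _ ≤ 2 * ∑ k, v k * (2 * R * D) := by
          refine mul_le_mul_of_nonneg_left (Finset.sum_le_sum fun k _ => hterm k) (by norm_num)
    _ = Kr * D := by
          rw [← Finset.sum_mul, hKrdef]
          ring
  have deriv₁ : ∀ t ∈ Set.Ioc (0 : ℝ) T,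
      HasDerivWithinAt (fun s (i j : Fin d) => H₁ s i j)
        (F (fun i j => H₁ t i j)) (Set.Iic t) t := by
    intro t ht
    refine (sol H₁ h₁ t (Set.Ioc_subset_Icc_self ht)).mono_of_mem_nhdsWithin ?_
    exact mem_nhdsWithin.mpr ⟨Set.Ioi 0, isOpen_Ioi, ht.1,
      fun r hr => ⟨le_of_lt hr.1, hr.2.trans ht.2⟩⟩
  have deriv₂ : ∀ t ∈ Set.Ioc (0 : ℝ) T,
      HasDerivWithinAt (fun s (i j : Fin d) => H₂ s i j)
        (F (fun i j => H₂ t i j)) (Set.Iic t) t := by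
    intro t ht
    refine (sol H₂ h₂ t (Set.Ioc_subset_Icc_self ht)).mono_of_mem_nhdsWithin ?_
    exact mem_nhdsWithin.mpr ⟨Set.Ioi 0, isOpen_Ioi, ht.1,
      fun r hr => ⟨le_of_lt hr.1, hr.2.trans ht.2⟩⟩
  have mem₁ : ∀ t ∈ Set.Ioc (0 : ℝ) T,
      (fun (i j : Fin d) => H₁ t i j) ∈ Metric.closedBall (0 : Fin d → Fin d → ℝ) R := by
    intro t ht
    exact mem_closedBall_zero_iff.2
      (le_trans (hC₁ t (Set.Ioc_subset_Icc_self ht)) (le_max_left _ _))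
  have mem₂ : ∀ t ∈ Set.Ioc (0 : ℝ) T,
      (fun (i j : Fin d) => H₂ t i j) ∈ Metric.closedBall (0 : Fin d → Fin d → ℝ) R := by
    intro t ht
    exact mem_closedBall_zero_iff.2
      (le_trans (hC₂ t (Set.Ioc_subset_Icc_self ht)) (le_max_right _ _))
  have hb : (fun (i j : Fin d) => H₁ T i j) = fun (i j : Fin d) => H₂ T i j := by
    simp only [h₁.2, h₂.2]
  have key := ODE_solution_unique_of_mem_Icc_left
    (v := fun _ y => F y) (s := fun _ => Metric.closedBall (0 : Fin d → Fin d → ℝ) R)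
    (K := Kr.toNNReal) (fun _ _ => hlip)
    (cont H₁ h₁) deriv₁ mem₁ (cont H₂ h₂) deriv₂ mem₂ hb
  intro t ht
  have h := key ht
  exact Matrix.ext fun i j => congrFun (congrFun h i) j

end RiccatiUnique

/-- **Global solvability of the matrix Riccati terminal value problem.** For `T > 0`,
`γ ≥ 0`, `V` diagonal with positive diagonal entries, `Σ` and `A` symmetric positive
semidefinite, the problem `H' = −2·H·V·H + γ·Σ` on `[0,T]`, `H T = −2A`, has exactly one
continuously differentiable solution on all of `[0,T]`, and it is symmetric-matrix valued.
(The derivative `−2·H·V·H + γ·Σ` is automatically continuous, so solutions are `C¹`.) -/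
theorem stmt_3 (d : ℕ) (T γ : ℝ) (hT : 0 < T) (hγ : 0 ≤ γ)
    (v : Fin d → ℝ) (hv : ∀ i, 0 < v i)
    (S A : Matrix (Fin d) (Fin d) ℝ) (hS : S.PosSemidef) (hA : A.PosSemidef) :
    (∃ H : ℝ → Matrix (Fin d) (Fin d) ℝ,
        IsRiccatiSol d T γ (Matrix.diagonal v) S A H ∧
        ∀ t ∈ Set.Icc (0 : ℝ) T, (H t).IsSymm) ∧
    (∀ H₁ H₂ : ℝ → Matrix (Fin d) (Fin d) ℝ,
        IsRiccatiSol d T γ (Matrix.diagonal v) S A H₁ →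
        IsRiccatiSol d T γ (Matrix.diagonal v) S A H₂ →
        Set.EqOn H₁ H₂ (Set.Icc (0 : ℝ) T)) := by
  refine ⟨exists_riccati d T γ hT hγ v hv S A hS hA, ?_⟩
  intro H₁ H₂ hh₁ hh₂
  exact riccati_unique d T γ hT v hv S A H₁ H₂ hh₁ hh₂
end

section
/- Let T > 0, γ ≥ 0, let V be a d×d real diagonal matrix with positive diagonal entries, Σ a d×d real symmetric positive semidefinite matrix, and A a d×d real symmetric positive semidefinite matrix. If H : [0,T] → M_d(ℝ) is a continuously differentiable symmetric-matrix-valued solution of H'(t) = −2·H(t)·V·H(t) + γ·Σ on [0,T] with H(T) = −2A, then for every t ∈ [0,T] the matrix −H(t) is positive semidefinite and the matrix H(t) + 2A + T·γ·Σ is positive semidefinite; that is, −2A − T·γ·Σ ≤ H(t) ≤ 0 in the order of symmetric matrices. -/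
open Matrix Set

section Helpers

lemma hasDerivWithinAt_singleton' {E : Type*} [NormedAddCommGroup E] [NormedSpace ℝ E]
    (f : ℝ → E) (x : ℝ) (v : E) : HasDerivWithinAt f v {x} x := by
  rw [HasDerivWithinAt, HasDerivAtFilter, nhdsWithin_singleton,
    hasFDerivAtFilter_iff_isLittleO]
  simp [Asymptotics.isLittleO_pure]

lemma glue_deriv {E : Type*} [NormedAddCommGroup E] [NormedSpace ℝ E] {g : ℝ → E → E}
    {a c b : ℝ} (hac : a ≤ c) (hcb : c ≤ b) {ψ φ : ℝ → E}
    (hψ : ∀ t ∈ Icc a c, HasDerivWithinAt ψ (g t (ψ t)) (Icc a c) t)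
    (hφ : ∀ t ∈ Icc c b, HasDerivWithinAt φ (g t (φ t)) (Icc c b) t)
    (hjoin : φ c = ψ c) :
    ∃ χ : ℝ → E, χ a = ψ a ∧ χ b = φ b ∧
      ∀ t ∈ Icc a b, HasDerivWithinAt χ (g t (χ t)) (Icc a b) t := by
  classical
  refine ⟨fun t => if t ≤ c then ψ t else φ t, if_pos hac, ?_, ?_⟩
  · by_cases hbc : b ≤ c
    · have hb : b = c := le_antisymm hbc hcb
      simp [hb, hjoin]
    · simp [hbc]
  intro t ht
  set χ : ℝ → E := fun t => if t ≤ c then ψ t else φ t with hχdef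
  rcases lt_trichotomy t c with htc | htc | htc
  · have hχt : χ t = ψ t := if_pos htc.le
    have hsub : Icc a b ∩ Iio c ⊆ Icc a c := fun z hz => ⟨hz.1.1, hz.2.le⟩
    have h2 : HasDerivWithinAt χ (g t (ψ t)) (Icc a b ∩ Iio c) t :=
      ((hψ t ⟨ht.1, htc.le⟩).mono hsub).congr (fun z hz => if_pos hz.2.le) hχt
    have h3 := (hasDerivWithinAt_inter (Iio_mem_nhds htc)).mp h2
    rwa [← hχt] at h3
  · subst htc
    have hχt : χ t = ψ t := if_pos le_rfl
    have B1 : HasDerivWithinAt χ (g t (ψ t)) (Icc a t) t :=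
      (hψ t ⟨ht.1, le_rfl⟩).congr (fun z hz => if_pos hz.2) hχt
    have B2 : HasDerivWithinAt χ (g t (ψ t)) (Icc t b) t := by
      have h0 := hφ t ⟨le_rfl, ht.2⟩
      rw [hjoin] at h0
      refine h0.congr (fun z hz => ?_) (by simp [hχdef, hjoin])
      by_cases hzc : z ≤ t
      · have hz' : z = t := le_antisymm hzc hz.1
        simp [hχdef, hz', hjoin]
      · simp [hχdef, hzc]
    have h3 := B1.union B2
    rw [Set.Icc_union_Icc_eq_Icc ht.1 ht.2] at h3
    rwa [← hχt] at h3
  · have hχt : χ t = φ t := if_neg (not_le.mpr htc)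
    have hsub : Icc a b ∩ Ioi c ⊆ Icc c b := fun z hz => ⟨hz.2.le, hz.1.2⟩
    have h2 : HasDerivWithinAt χ (g t (φ t)) (Icc a b ∩ Ioi c) t :=
      ((hφ t ⟨htc.le, ht.2⟩).mono hsub).congr (fun z hz => if_neg (not_le.mpr hz.2)) hχt
    have h3 := (hasDerivWithinAt_inter (Ioi_mem_nhds htc)).mp h2
    rwa [← hχt] at h3

variable {d : ℕ}

lemma mulVec_norm_le {M : Matrix (Fin d) (Fin d) ℝ} {K : ℝ}
    (hK : 0 ≤ K) (h : ∑ i, ∑ j, |M i j| ≤ K) (y : Fin d → ℝ) :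
    ‖M *ᵥ y‖ ≤ K * ‖y‖ := by
  rw [pi_norm_le_iff_of_nonneg (by positivity)]
  intro i
  have h1 : ‖(M *ᵥ y) i‖ = |∑ j, M i j * y j| := by simp [mulVec, dotProduct, Real.norm_eq_abs]
  rw [h1]
  calc |∑ j, M i j * y j| ≤ ∑ j, |M i j * y j| := Finset.abs_sum_le_sum_abs _ _
    _ ≤ ∑ j, |M i j| * ‖y‖ := by
        refine Finset.sum_le_sum fun j _ => ?_
        rw [abs_mul]
        exact mul_le_mul_of_nonneg_left (norm_le_pi_norm y j) (abs_nonneg _)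
    _ = (∑ j, |M i j|) * ‖y‖ := by rw [Finset.sum_mul]
    _ ≤ K * ‖y‖ := by
        refine mul_le_mul_of_nonneg_right ?_ (norm_nonneg _)
        calc (∑ j, |M i j|) ≤ ∑ i, ∑ j, |M i j| :=
              Finset.single_le_sum (f := fun i => ∑ j, |M i j|)
                (fun i _ => Finset.sum_nonneg fun j _ => abs_nonneg _) (Finset.mem_univ i)
          _ ≤ K := h

lemma apriori_bound {a c : ℝ} (hac : a ≤ c) {M : ℝ → Matrix (Fin d) (Fin d) ℝ} {K : ℝ}
    (hK0 : 0 ≤ K)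
    (hK : ∀ t ∈ Icc a c, ∀ y : Fin d → ℝ, ‖M t *ᵥ y‖ ≤ K * ‖y‖)
    {ψ : ℝ → Fin d → ℝ}
    (hψ : ∀ t ∈ Icc a c, HasDerivWithinAt ψ (M t *ᵥ ψ t) (Icc a c) t) :
    ∀ t ∈ Icc a c, ‖ψ t‖ ≤ ‖ψ a‖ * Real.exp (K * (c - a)) := by
  intro t ht
  have hcont : ContinuousOn ψ (Icc a c) := fun s hs => (hψ s hs).continuousWithinAt
  have hder : ∀ s ∈ Ico a c, HasDerivWithinAt ψ (M s *ᵥ ψ s) (Ici s) s := by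
    intro s hs
    have h1 := (hψ s ⟨hs.1, hs.2.le⟩).mono (Icc_subset_Icc hs.1 le_rfl)
    rw [← Set.Ici_inter_Iic] at h1
    exact (hasDerivWithinAt_inter (Iic_mem_nhds hs.2)).mp h1
  have h2 := norm_le_gronwallBound_of_norm_deriv_right_le (f' := fun s => M s *ᵥ ψ s)
    (δ := ‖ψ a‖) (K := K) (ε := 0) hcont hder le_rfl
    (fun s hs => by simpa using hK s ⟨hs.1, hs.2.le⟩ (ψ s)) t ht
  rw [gronwallBound_ε0] at h2
  refine h2.trans ?_
  have h3 : K * (t - a) ≤ K * (c - a) := by nlinarith [ht.2, ht.1]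
  exact mul_le_mul_of_nonneg_left (Real.exp_le_exp.mpr h3) (norm_nonneg _)

lemma linear_ode_exists {a b : ℝ} (hab : a ≤ b) {M : ℝ → Matrix (Fin d) (Fin d) ℝ}
    (hM : ∀ i j, ContinuousOn (fun t => M t i j) (Icc a b)) (x : Fin d → ℝ) :
    ∃ ψ : ℝ → Fin d → ℝ, ψ a = x ∧
      ∀ t ∈ Icc a b, HasDerivWithinAt ψ (M t *ᵥ ψ t) (Icc a b) t := by
  have hNcont : ContinuousOn (fun t => ∑ i, ∑ j, |M t i j|) (Icc a b) :=
    continuousOn_finset_sum _ fun i _ => continuousOn_finset_sum _ fun j _ => (hM i j).abs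
  obtain ⟨C, hC⟩ := isCompact_Icc.exists_bound_of_continuousOn hNcont
  set K : ℝ := max C 0 with hKdef
  have hK0 : 0 ≤ K := le_max_right _ _
  have hKn : ∀ t ∈ Icc a b, ∑ i, ∑ j, |M t i j| ≤ K := fun t ht =>
    ((le_abs_self _).trans ((Real.norm_eq_abs _) ▸ hC t ht)).trans (le_max_left _ _)
  have hop : ∀ t ∈ Icc a b, ∀ y : Fin d → ℝ, ‖M t *ᵥ y‖ ≤ K * ‖y‖ := fun t ht y =>
    mulVec_norm_le hK0 (hKn t ht) y
  set Klip : NNReal := ⟨K, hK0⟩ with hKlip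
  have hlip : ∀ t ∈ Icc a b, ∀ s : Set (Fin d → ℝ),
      LipschitzOnWith Klip (fun y => M t *ᵥ y) s := by
    intro t ht s
    refine LipschitzOnWith.of_dist_le_mul fun y _ z _ => ?_
    rw [dist_eq_norm, dist_eq_norm, ← Matrix.mulVec_sub]
    exact hop t ht (y - z)
  set B : ℝ := ‖x‖ * Real.exp (K * (b - a)) with hBdef
  have hB0 : 0 ≤ B := mul_nonneg (norm_nonneg _) (Real.exp_nonneg _)
  set Cb : ℝ := K * (B + 1) with hCbdef
  have hCb0 : 0 ≤ Cb := mul_nonneg hK0 (by linarith)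
  set ε : ℝ := 1 / (Cb + 1) with hεdef
  have hε : 0 < ε := by positivity
  have key : ∀ n : ℕ, ∃ ψ : ℝ → Fin d → ℝ, ψ a = x ∧
      ∀ t ∈ Icc a (min b (a + n * ε)),
        HasDerivWithinAt ψ (M t *ᵥ ψ t) (Icc a (min b (a + n * ε))) t := by
    intro n
    induction n with
    | zero =>
      refine ⟨fun _ => x, rfl, fun t ht => ?_⟩
      have h0 : min b (a + (0 : ℕ) * ε) = a := by simp [min_eq_right hab]
      rw [h0] at ht ⊢
      rw [Icc_self] at ht ⊢
      rw [mem_singleton_iff] at ht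
      subst ht
      exact hasDerivWithinAt_singleton' _ _ _
    | succ n ih =>
      obtain ⟨ψ, hψa, hψ⟩ := ih
      by_cases hb : b ≤ a + n * ε
      · have e1 : min b (a + (n : ℕ) * ε) = b := min_eq_left hb
        have e2 : min b (a + ((n + 1 : ℕ) : ℝ) * ε) = b := by
          refine min_eq_left ?_
          push_cast
          nlinarith [hε.le]
        rw [e2]
        rw [e1] at hψ
        exact ⟨ψ, hψa, hψ⟩
      · push_neg at hb
        set c : ℝ := a + n * ε with hcdef
        have hcb : c ≤ b := hb.le
        have hac : a ≤ c := by
          have : (0 : ℝ) ≤ n * ε := mul_nonneg (Nat.cast_nonneg n) hε.le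
          linarith
        have e1 : min b c = c := min_eq_right hcb
        rw [e1] at hψ
        have hsub : Icc a c ⊆ Icc a b := Icc_subset_Icc le_rfl hcb
        have hop' : ∀ t ∈ Icc a c, ∀ y : Fin d → ℝ, ‖M t *ᵥ y‖ ≤ K * ‖y‖ :=
          fun t ht y => hop t (hsub ht) y
        have hnorm : ‖ψ c‖ ≤ B := by
          have h2 := apriori_bound hac hK0 hop' hψ c ⟨hac, le_rfl⟩
          rw [hψa] at h2
          refine h2.trans ?_
          rw [hBdef]
          refine mul_le_mul_of_nonneg_left (Real.exp_le_exp.mpr ?_) (norm_nonneg _)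
          nlinarith
        set c' : ℝ := min b (c + ε) with hc'def
        have hcc' : c ≤ c' := le_min hcb (by linarith)
        have hc'b : c' ≤ b := min_le_left _ _
        have hsub' : Icc c c' ⊆ Icc a b := Icc_subset_Icc hac hc'b
        have hpl : IsPicardLindelof (fun t y => M t *ᵥ y) (⟨c, ⟨le_rfl, hcc'⟩⟩ : Icc c c') (ψ c) 1 0
            (⟨Cb, hCb0⟩ : NNReal) Klip :=
          { lipschitzOnWith := fun t ht => hlip t (hsub' ht) _
            continuousOn := fun y _ => by
              show ContinuousOn (fun t => M t *ᵥ y) (Icc c c')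
              refine continuousOn_pi.mpr fun i => ?_
              have h4 : (fun t => (M t *ᵥ y) i) = fun t => ∑ j, M t i j * y j := by
                funext t; simp [mulVec, dotProduct]
              rw [h4]
              exact continuousOn_finset_sum _ fun j _ =>
                ((hM i j).mono hsub').mul continuousOn_const
            norm_le := fun t ht y hy => by
              have h1 : ‖y‖ ≤ B + 1 := by
                have h2 : ‖y - ψ c‖ ≤ 1 := mem_closedBall_iff_norm.mp hy
                calc ‖y‖ = ‖ψ c + (y - ψ c)‖ := by ring_nf
                  _ ≤ ‖ψ c‖ + ‖y - ψ c‖ := norm_add_le _ _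
                  _ ≤ B + 1 := add_le_add hnorm h2
              calc ‖M t *ᵥ y‖ ≤ K * ‖y‖ := hop t (hsub' ht) y
                _ ≤ K * (B + 1) := mul_le_mul_of_nonneg_left h1 hK0
            mul_max_le := by
              show Cb * max (c' - c) (c - c) ≤ ((1 : NNReal) : ℝ) - ((0 : NNReal) : ℝ)
              rw [NNReal.coe_one, NNReal.coe_zero, sub_zero]
              have h1 : max (c' - c) (c - c) = c' - c := max_eq_left (by linarith)
              rw [h1]
              have h2 : c' - c ≤ ε := by
                have := min_le_right b (c + ε)
                simp only [← hc'def] at this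
                linarith
              calc Cb * (c' - c) ≤ Cb * ε := mul_le_mul_of_nonneg_left h2 hCb0
                _ = Cb / (Cb + 1) := by rw [hεdef]; ring
                _ ≤ 1 := by
                    rw [div_le_one (by linarith)]
                    linarith }
        obtain ⟨φ, hφc, hφ⟩ := hpl.exists_eq_forall_mem_Icc_hasDerivWithinAt₀
        obtain ⟨χ, hχa, _, hχ⟩ := glue_deriv (g := fun t y => M t *ᵥ y) hac hcc' hψ hφ hφc
        have e3 : min b (a + ((n + 1 : ℕ) : ℝ) * ε) = c' := by
          rw [hc'def, hcdef]
          congr 1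
          push_cast
          ring
        rw [e3]
        exact ⟨χ, hχa.trans hψa, hχ⟩
  obtain ⟨n, hn⟩ := exists_nat_ge ((b - a) / ε)
  obtain ⟨ψ, hψa, hψ⟩ := key n
  have e : min b (a + n * ε) = b := by
    refine min_eq_left ?_
    rw [div_le_iff₀ hε] at hn
    linarith
  rw [e] at hψ
  exact ⟨ψ, hψa, hψ⟩

lemma quad_sym1 (v : Fin d → ℝ) {Hm : Matrix (Fin d) (Fin d) ℝ} (hH : Hmᵀ = Hm)
    (u : Fin d → ℝ) :
    ((diagonal v * Hm) *ᵥ u) ⬝ᵥ (Hm *ᵥ u) = u ⬝ᵥ ((Hm * diagonal v * Hm) *ᵥ u) := by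
  rw [← vecMul_transpose, transpose_mul, diagonal_transpose, hH, ← dotProduct_mulVec,
    mulVec_mulVec, Matrix.mul_assoc]

lemma quad_sym2 (v : Fin d → ℝ) (Hm : Matrix (Fin d) (Fin d) ℝ) (u : Fin d → ℝ) :
    u ⬝ᵥ (Hm *ᵥ ((diagonal v * Hm) *ᵥ u)) = u ⬝ᵥ ((Hm * diagonal v * Hm) *ᵥ u) := by
  rw [mulVec_mulVec, Matrix.mul_assoc]

lemma quad_nonneg {v : Fin d → ℝ} (hv : ∀ i, 0 ≤ v i) {Hm : Matrix (Fin d) (Fin d) ℝ}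
    (hH : Hmᵀ = Hm) (u : Fin d → ℝ) :
    0 ≤ u ⬝ᵥ ((Hm * diagonal v * Hm) *ᵥ u) := by
  have h1 : (Hm * diagonal v * Hm) *ᵥ u = Hm *ᵥ (diagonal v *ᵥ (Hm *ᵥ u)) := by
    rw [mulVec_mulVec, mulVec_mulVec]
  rw [h1, dotProduct_mulVec, ← mulVec_transpose, hH]
  set y := Hm *ᵥ u
  have h2 : y ⬝ᵥ (diagonal v *ᵥ y) = ∑ i, v i * (y i * y i) := by
    simp [dotProduct, mulVec_diagonal]
    exact Finset.sum_congr rfl fun i _ => by ring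
  rw [h2]
  exact Finset.sum_nonneg fun i _ => mul_nonneg (hv i) (mul_self_nonneg _)

lemma dsum_eq' (a b : Fin d → ℝ) (N : Matrix (Fin d) (Fin d) ℝ) :
    ∑ i, ∑ j, a i * N i j * b j = a ⬝ᵥ N *ᵥ b := by
  simp [dotProduct, mulVec, Finset.mul_sum, mul_assoc]

lemma algebra_key (γ : ℝ) (v : Fin d → ℝ) {Hm : Matrix (Fin d) (Fin d) ℝ} (hH : Hmᵀ = Hm)
    (S : Matrix (Fin d) (Fin d) ℝ) (u : Fin d → ℝ) :
    (∑ i, ∑ j, ((((diagonal v * Hm) *ᵥ u) i * Hm i j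
        + u i * (((-2 : ℝ) • (Hm * diagonal v * Hm) + γ • S) i j)) * u j
        + u i * Hm i j * (((diagonal v * Hm) *ᵥ u) j)))
      = γ * (u ⬝ᵥ S *ᵥ u) := by
  set w := (diagonal v * Hm) *ᵥ u with hw
  set D := ((-2 : ℝ) • (Hm * diagonal v * Hm) + γ • S) with hD
  have expand : ∀ i j : Fin d, ((w i * Hm i j + u i * D i j) * u j + u i * Hm i j * w j)
      = w i * Hm i j * u j + (u i * D i j * u j + u i * Hm i j * w j) := by
    intro i j; ring
  rw [Finset.sum_congr rfl fun i _ => Finset.sum_congr rfl fun j _ => expand i j]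
  simp only [Finset.sum_add_distrib]
  rw [dsum_eq' w u Hm, dsum_eq' u u D, dsum_eq' u w Hm]
  have h3 : u ⬝ᵥ Hm *ᵥ w = u ⬝ᵥ ((Hm * diagonal v * Hm) *ᵥ u) := quad_sym2 v Hm u
  have h1 : w ⬝ᵥ Hm *ᵥ u = u ⬝ᵥ ((Hm * diagonal v * Hm) *ᵥ u) := quad_sym1 v hH u
  have h2 : u ⬝ᵥ D *ᵥ u
      = -2 * (u ⬝ᵥ ((Hm * diagonal v * Hm) *ᵥ u)) + γ * (u ⬝ᵥ S *ᵥ u) := by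
    rw [hD, add_mulVec, smul_mulVec, smul_mulVec, dotProduct_add,
      dotProduct_smul, dotProduct_smul]
    simp [smul_eq_mul]
  rw [h1, h2, h3]
  ring

end Helpers

/-- **Two-sided semidefinite bounds for the Riccati flow (estimate (1.15)).**
If `H` is a `C¹` symmetric-matrix-valued solution on `[0,T]` of
`H' = −2·H·V·H + γ·Σ`, `H T = −2A`, with `V` diagonal positive, `Σ, A` symmetric
positive semidefinite and `γ ≥ 0`, then `−2A − Tγ·Σ ≤ H t ≤ 0` for every `t ∈ [0,T]`,
i.e. `−H t` and `H t + 2A + Tγ·Σ` are positive semidefinite. -/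
theorem stmt_4 (d : ℕ) (T γ : ℝ) (hT : 0 < T) (hγ : 0 ≤ γ)
    (v : Fin d → ℝ) (hv : ∀ i, 0 < v i)
    (S A : Matrix (Fin d) (Fin d) ℝ) (hS : S.PosSemidef) (hA : A.PosSemidef)
    (H : ℝ → Matrix (Fin d) (Fin d) ℝ)
    (hsymm : ∀ t ∈ Set.Icc (0 : ℝ) T, (H t).IsSymm)
    (hode : ∀ t ∈ Set.Icc (0 : ℝ) T, ∀ i j,
      HasDerivWithinAt (fun s => H s i j)
        (((-2 : ℝ) • (H t * Matrix.diagonal v * H t) + γ • S) i j)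
        (Set.Icc (0 : ℝ) T) t)
    (hterm : H T = (-2 : ℝ) • A) :
    ∀ t ∈ Set.Icc (0 : ℝ) T,
      (-(H t)).PosSemidef ∧ (H t + (2 : ℝ) • A + (T * γ) • S).PosSemidef := by
  intro t₀ ht
  have hv0 : ∀ i, 0 ≤ v i := fun i => (hv i).le
  have hsub : Icc t₀ T ⊆ Icc (0 : ℝ) T := Icc_subset_Icc ht.1 le_rfl
  have hcontH : ∀ i j, ContinuousOn (fun s => H s i j) (Icc (0 : ℝ) T) :=
    fun i j s hs => (hode s hs i j).continuousWithinAt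
  -- upper bound: xᵀ H(t₀) x ≤ 0
  have upper : ∀ x : Fin d → ℝ, x ⬝ᵥ (H t₀ *ᵥ x) ≤ 0 := by
    intro x
    have hMc : ∀ i j, ContinuousOn (fun s => (Matrix.diagonal v * H s) i j) (Icc t₀ T) := by
      intro i j
      have h4 : (fun s => (Matrix.diagonal v * H s) i j) = fun s => v i * H s i j := by
        funext s; rw [diagonal_mul]
      rw [h4]
      exact continuousOn_const.mul ((hcontH i j).mono hsub)
    obtain ⟨ψ, hψa, hψ⟩ := linear_ode_exists ht.2
      (M := fun s => Matrix.diagonal v * H s) hMc x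
    have hm : ∀ s ∈ Icc t₀ T,
        HasDerivWithinAt (fun r => ∑ i, ∑ j, ψ r i * H r i j * ψ r j)
          (γ * (ψ s ⬝ᵥ S *ᵥ ψ s)) (Icc t₀ T) s := by
      intro s hs
      have hcomp := hasDerivWithinAt_pi.mp (hψ s hs)
      have hsum : HasDerivWithinAt (fun r => ∑ i, ∑ j, ψ r i * H r i j * ψ r j)
          (∑ i, ∑ j, ((((Matrix.diagonal v * H s) *ᵥ ψ s) i * H s i j
            + ψ s i * (((-2 : ℝ) • (H s * Matrix.diagonal v * H s) + γ • S) i j)) * ψ s j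
            + ψ s i * H s i j * (((Matrix.diagonal v * H s) *ᵥ ψ s) j))) (Icc t₀ T) s := by
        refine HasDerivWithinAt.fun_sum fun i _ => HasDerivWithinAt.fun_sum fun j _ => ?_
        exact ((hcomp i).mul ((hode s (hsub hs) i j).mono hsub)).mul (hcomp j)
      rwa [algebra_key γ v (hsymm s (hsub hs)) S (ψ s)] at hsum
    have hmono : MonotoneOn (fun r => ∑ i, ∑ j, ψ r i * H r i j * ψ r j) (Icc t₀ T) := by
      refine monotoneOn_of_hasDerivWithinAt_nonneg (convex_Icc _ _)
        (fun s hs => (hm s hs).continuousWithinAt)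
        (fun s hs => (hm s (interior_subset hs)).mono interior_subset)
        (fun s hs => ?_)
      have h0 := hS.dotProduct_mulVec_nonneg (ψ s)
      rw [star_trivial] at h0
      exact mul_nonneg hγ h0
    have hle := hmono (left_mem_Icc.mpr ht.2) (right_mem_Icc.mpr ht.2) ht.2
    have hmt0 : (∑ i, ∑ j, ψ t₀ i * H t₀ i j * ψ t₀ j) = x ⬝ᵥ (H t₀ *ᵥ x) := by
      rw [hψa] at *
      exact dsum_eq' x x (H t₀)
    have hmT : (∑ i, ∑ j, ψ T i * H T i j * ψ T j) ≤ 0 := by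
      rw [dsum_eq', hterm, smul_mulVec, dotProduct_smul]
      have h0 := hA.dotProduct_mulVec_nonneg (ψ T)
      rw [star_trivial] at h0
      simp only [smul_eq_mul]
      nlinarith
    simp only at hle
    linarith [hle, hmt0, hmT]
  -- lower bound
  have lower : ∀ x : Fin d → ℝ,
      0 ≤ x ⬝ᵥ ((H t₀ + (2 : ℝ) • A + (T * γ) • S) *ᵥ x) := by
    intro x
    have hSx : 0 ≤ x ⬝ᵥ S *ᵥ x := by have := hS.dotProduct_mulVec_nonneg x; rwa [star_trivial] at this
    have hAx : 0 ≤ x ⬝ᵥ A *ᵥ x := by have := hA.dotProduct_mulVec_nonneg x; rwa [star_trivial] at this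
    set bb : ℝ := γ * (x ⬝ᵥ S *ᵥ x) with hbb
    have hbb0 : 0 ≤ bb := mul_nonneg hγ hSx
    have hp : ∀ s ∈ Icc (0 : ℝ) T,
        HasDerivWithinAt (fun r => (∑ i, ∑ j, x i * H r i j * x j) - bb * r)
          (-2 * (x ⬝ᵥ ((H s * Matrix.diagonal v * H s) *ᵥ x))) (Icc (0 : ℝ) T) s := by
      intro s hs
      have hf : HasDerivWithinAt (fun r => ∑ i, ∑ j, x i * H r i j * x j)
          (∑ i, ∑ j, x i * (((-2 : ℝ) • (H s * Matrix.diagonal v * H s) + γ • S) i j) * x j)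
          (Icc (0 : ℝ) T) s :=
        HasDerivWithinAt.fun_sum fun i _ => HasDerivWithinAt.fun_sum fun j _ =>
          ((hode s hs i j).const_mul (x i)).mul_const (x j)
      have hlin : HasDerivWithinAt (fun r => bb * r) (bb * 1) (Icc (0 : ℝ) T) s :=
        (hasDerivWithinAt_id s _).const_mul bb
      have h5 := hf.sub hlin
      have e : (∑ i, ∑ j, x i * (((-2 : ℝ) • (H s * Matrix.diagonal v * H s) + γ • S) i j) * x j)
          - bb * 1 = -2 * (x ⬝ᵥ ((H s * Matrix.diagonal v * H s) *ᵥ x)) := by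
        rw [dsum_eq', add_mulVec, smul_mulVec, smul_mulVec, dotProduct_add,
          dotProduct_smul, dotProduct_smul, hbb]
        simp only [smul_eq_mul]
        ring
      rwa [e] at h5
    have hanti : AntitoneOn (fun r => (∑ i, ∑ j, x i * H r i j * x j) - bb * r)
        (Icc (0 : ℝ) T) := by
      refine antitoneOn_of_hasDerivWithinAt_nonpos (convex_Icc _ _)
        (fun s hs => (hp s hs).continuousWithinAt)
        (fun s hs => (hp s (interior_subset hs)).mono interior_subset)
        (fun s hs => ?_)
      have := quad_nonneg hv0 (hsymm s (interior_subset hs)) x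
      linarith
    have hple := hanti ht (right_mem_Icc.mpr (le_trans ht.1 ht.2)) ht.2
    have hfT : (∑ i, ∑ j, x i * H T i j * x j) = -2 * (x ⬝ᵥ (A *ᵥ x)) := by
      rw [dsum_eq', hterm, smul_mulVec, dotProduct_smul]
      simp [smul_eq_mul]
    have hgoal : x ⬝ᵥ ((H t₀ + (2 : ℝ) • A + (T * γ) • S) *ᵥ x)
        = (∑ i, ∑ j, x i * H t₀ i j * x j) + 2 * (x ⬝ᵥ A *ᵥ x)
          + (T * γ) * (x ⬝ᵥ S *ᵥ x) := by
      rw [add_mulVec, add_mulVec, smul_mulVec, smul_mulVec, dotProduct_add,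
        dotProduct_add, dotProduct_smul, dotProduct_smul, dsum_eq']
      simp [smul_eq_mul]
    rw [hgoal]
    have e2 : (T * γ) * (x ⬝ᵥ S *ᵥ x) = T * bb := by rw [hbb]; ring
    have h6 : 0 ≤ bb * t₀ := mul_nonneg hbb0 ht.1
    rw [e2]
    simp only at hple
    nlinarith [hple, hfT]
  -- assemble
  have hsym := hsymm t₀ ht
  constructor
  · refine Matrix.PosSemidef.of_dotProduct_mulVec_nonneg ?_ ?_
    · show (-(H t₀))ᴴ = -(H t₀)
      rw [conjTranspose_eq_transpose_of_trivial, transpose_neg, hsym]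
    · intro y
      rw [star_trivial, neg_mulVec, dotProduct_neg]
      simpa using neg_nonneg.mpr (upper y)
  · refine Matrix.PosSemidef.of_dotProduct_mulVec_nonneg ?_ ?_
    · show (H t₀ + (2 : ℝ) • A + (T * γ) • S)ᴴ = _
      rw [conjTranspose_add, conjTranspose_add, conjTranspose_smul, conjTranspose_smul,
        hA.1, hS.1, conjTranspose_eq_transpose_of_trivial, hsym]
      norm_num
    · intro y
      rw [star_trivial]
      exact lower y
end

section
/- Let C and K_T be d×d real matrices with C·K_T = K_T·C, let T > 0, and suppose K : [0,T] → M_d(ℝ) is continuously differentiable with K'(t) = −2·K(t)² + C for all t ∈ [0,T] and K(T) = K_T. Then K(t)·C = C·K(t) for every t ∈ [0,T], and K(t)·K(s) = K(s)·K(t) for all s, t ∈ [0,T]. -/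
open Matrix Set

section Stmt5Aux

variable {d : ℕ}

noncomputable local instance matNAG : NormedAddCommGroup (Matrix (Fin d) (Fin d) ℝ) :=
  show NormedAddCommGroup (Fin d → Fin d → ℝ) from inferInstance

noncomputable local instance matNS : NormedSpace ℝ (Matrix (Fin d) (Fin d) ℝ) :=
  show NormedSpace ℝ (Fin d → Fin d → ℝ) from inferInstance

private lemma norm_matmul_le (A B : Matrix (Fin d) (Fin d) ℝ) :
    ‖A * B‖ ≤ (d : ℝ) * ‖A‖ * ‖B‖ := by
  have h0 : (0 : ℝ) ≤ (d : ℝ) * ‖A‖ * ‖B‖ := by positivity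
  refine (pi_norm_le_iff_of_nonneg h0).2 fun i => ?_
  refine (pi_norm_le_iff_of_nonneg h0).2 fun j => ?_
  rw [show (A * B) i j = ∑ k, A i k * B k j from Matrix.mul_apply]
  calc ‖∑ k, A i k * B k j‖ ≤ ∑ k, ‖A i k * B k j‖ := norm_sum_le _ _
    _ ≤ ∑ _k : Fin d, ‖A‖ * ‖B‖ := by
        refine Finset.sum_le_sum fun k _ => ?_
        rw [norm_mul]
        gcongr
        · exact (norm_le_pi_norm (A i) k).trans (norm_le_pi_norm A i)
        · exact (norm_le_pi_norm (B k) j).trans (norm_le_pi_norm B k)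
    _ = (d : ℝ) * ‖A‖ * ‖B‖ := by
        simp [Finset.sum_const, mul_assoc]

private lemma comm_aux (A B C' : Matrix (Fin d) (Fin d) ℝ) (h : C' * B = B * C') :
    ((-2 : ℝ) • (A * A) + C') * B - B * ((-2 : ℝ) • (A * A) + C') =
      (-2 : ℝ) • (A * (A * B - B * A) + (A * B - B * A) * A) := by
  simp only [add_mul, mul_add, sub_mul, mul_sub, smul_mul_assoc, mul_smul_comm,
    smul_sub, smul_add, mul_assoc, h]
  abel

/-- **Commutant invariance of the quadratic Riccati flow.** If `K' = −2K² + C` on `[0,T]`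
with `K T = K_T` and `C·K_T = K_T·C`, then `K t` commutes with `C` for each `t ∈ [0,T]`,
and the family `{K t : t ∈ [0,T]}` pairwise commutes. -/
theorem stmt_5 (d : ℕ) (T : ℝ) (hT : 0 < T)
    (C KT : Matrix (Fin d) (Fin d) ℝ) (hcomm : C * KT = KT * C)
    (K : ℝ → Matrix (Fin d) (Fin d) ℝ)
    (hode : ∀ t ∈ Set.Icc (0 : ℝ) T, ∀ i j,
      HasDerivWithinAt (fun s => K s i j)
        (((-2 : ℝ) • (K t * K t) + C) i j) (Set.Icc (0 : ℝ) T) t)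
    (hterm : K T = KT) :
    (∀ t ∈ Set.Icc (0 : ℝ) T, K t * C = C * K t) ∧
    (∀ s ∈ Set.Icc (0 : ℝ) T, ∀ t ∈ Set.Icc (0 : ℝ) T, K t * K s = K s * K t) := by
  -- matrix-valued derivative
  have hicc : ∀ t ∈ Icc (0 : ℝ) T,
      HasDerivWithinAt K ((-2 : ℝ) • (K t * K t) + C) (Icc 0 T) t := by
    intro t ht
    exact hasDerivWithinAt_pi.2 fun i => hasDerivWithinAt_pi.2 fun j => hode t ht i j
  have hKcont : ContinuousOn K (Icc 0 T) := fun t ht => (hicc t ht).continuousWithinAt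
  obtain ⟨M, hM⟩ := isCompact_Icc.exists_bound_of_continuousOn hKcont
  have hM0 : (0 : ℝ) ≤ M := le_trans (norm_nonneg _) (hM 0 ⟨le_rfl, hT.le⟩)
  -- clamped coefficient and vector field
  set Kc : ℝ → Matrix (Fin d) (Fin d) ℝ := fun t => K (projIcc 0 T hT.le t) with hKc_def
  have hKc_norm : ∀ t, ‖Kc t‖ ≤ M := fun t => hM _ (projIcc 0 T hT.le t).2
  have hKc_eq : ∀ t ∈ Icc (0 : ℝ) T, Kc t = K t := by
    intro t ht
    simp [hKc_def, projIcc_of_mem hT.le ht]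
  set v : ℝ → Matrix (Fin d) (Fin d) ℝ → Matrix (Fin d) (Fin d) ℝ :=
    fun t X => (-2 : ℝ) • (Kc t * X + X * Kc t) with hv_def
  set c : NNReal := Real.toNNReal (4 * d * M) with hc_def
  have hc_coe : (c : ℝ) = 4 * d * M := Real.coe_toNNReal _ (by positivity)
  have hlip : ∀ t : ℝ, LipschitzOnWith c (v t) ((fun _ : ℝ => (univ : Set _)) t) := by
    intro t
    rw [lipschitzOnWith_univ]
    refine LipschitzWith.of_dist_le_mul fun x y => ?_
    rw [dist_eq_norm, dist_eq_norm]
    have hsub : v t x - v t y = (-2 : ℝ) • (Kc t * (x - y) + (x - y) * Kc t) := by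
      simp only [hv_def, mul_sub, sub_mul, smul_sub, smul_add]
      abel
    erw [hsub]
    rw [norm_smul]
    have h1 : ‖Kc t * (x - y)‖ ≤ (d : ℝ) * M * ‖x - y‖ := by
      calc ‖Kc t * (x - y)‖ ≤ (d : ℝ) * ‖Kc t‖ * ‖x - y‖ := norm_matmul_le _ _
        _ ≤ (d : ℝ) * M * ‖x - y‖ := by
            gcongr
            exact hKc_norm t
    have h2 : ‖(x - y) * Kc t‖ ≤ (d : ℝ) * M * ‖x - y‖ := by
      calc ‖(x - y) * Kc t‖ ≤ (d : ℝ) * ‖x - y‖ * ‖Kc t‖ := norm_matmul_le _ _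
        _ ≤ (d : ℝ) * M * ‖x - y‖ := by
            rw [mul_right_comm]
            gcongr
            exact hKc_norm t
    have h3 : ‖Kc t * (x - y) + (x - y) * Kc t‖ ≤ 2 * ((d : ℝ) * M) * ‖x - y‖ := by
      calc ‖Kc t * (x - y) + (x - y) * Kc t‖ ≤ ‖Kc t * (x - y)‖ + ‖(x - y) * Kc t‖ :=
            norm_add_le _ _
        _ ≤ 2 * ((d : ℝ) * M) * ‖x - y‖ := by nlinarith [h1, h2]
    have : ‖(-2 : ℝ)‖ = 2 := by norm_num
    rw [this, hc_coe]
    have h4 : 2 * ‖Kc t * (x - y) + (x - y) * Kc t‖ ≤ 4 * (d : ℝ) * M * ‖x - y‖ := by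
      nlinarith [h3, norm_nonneg (x - y)]
    exact h4
  -- derivative of conjugation-type functions
  have hφder : ∀ (B : Matrix (Fin d) (Fin d) ℝ), ∀ t ∈ Icc (0 : ℝ) T,
      HasDerivWithinAt (fun u => K u * B - B * K u)
        (((-2 : ℝ) • (K t * K t) + C) * B - B * ((-2 : ℝ) • (K t * K t) + C)) (Icc 0 T) t := by
    intro B t ht
    let φ : Matrix (Fin d) (Fin d) ℝ →ₗ[ℝ] Matrix (Fin d) (Fin d) ℝ :=
      { toFun := fun X => X * B - B * X
        map_add' := fun X Y => by noncomm_ring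
        map_smul' := fun r X => by
          simp [smul_sub, smul_mul_assoc, mul_smul_comm] }
    have hd := ((LinearMap.toContinuousLinearMap φ).hasFDerivAt
      (x := K t)).comp_hasDerivWithinAt t (hicc t ht)
    exact hd
  have hφcont : ∀ (B : Matrix (Fin d) (Fin d) ℝ),
      ContinuousOn (fun u => K u * B - B * K u) (Icc 0 T) :=
    fun B t ht => (hφder B t ht).continuousWithinAt
  -- Part 1: commutation with C
  have part1 : ∀ t ∈ Icc (0 : ℝ) T, K t * C = C * K t := by
    have hf' : ∀ t ∈ Ioc (0 : ℝ) T,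
        HasDerivWithinAt (fun u => K u * C - C * K u)
          (v t (K t * C - C * K t)) (Iic t) t := by
      intro t ht
      have htIcc : t ∈ Icc (0 : ℝ) T := ⟨ht.1.le, ht.2⟩
      have hd := (hφder C t htIcc).mono_of_mem_nhdsWithin (Icc_mem_nhdsLE_of_mem ⟨ht.1, ht.2⟩)
      have hval : v t (K t * C - C * K t) =
          (-2 : ℝ) • (K t * (K t * C - C * K t) + (K t * C - C * K t) * K t) := by
        simp only [hv_def, hKc_eq t htIcc]
      rw [comm_aux (K t) C C rfl, ← hval] at hd
      exact hd
    have hg' : ∀ t ∈ Ioc (0 : ℝ) T,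
        HasDerivWithinAt (fun _ : ℝ => (0 : Matrix (Fin d) (Fin d) ℝ))
          (v t ((fun _ : ℝ => (0 : Matrix (Fin d) (Fin d) ℝ)) t)) (Iic t) t := by
      intro t ht
      have : v t (0 : Matrix (Fin d) (Fin d) ℝ) = 0 := by simp [hv_def]
      rw [this]
      exact hasDerivWithinAt_const _ _ _
    have hb : K T * C - C * K T = (0 : Matrix (Fin d) (Fin d) ℝ) := by
      rw [hterm, hcomm]; abel
    have heq := ODE_solution_unique_of_mem_Icc_left (fun t _ => hlip t) (hφcont C) hf'
      (fun _ _ => trivial) continuousOn_const hg' (fun _ _ => trivial) hb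
    intro t ht
    have := heq ht
    simpa [sub_eq_zero] using this
  -- Part 2: pairwise commutation (forward from s)
  have key : ∀ s ∈ Icc (0 : ℝ) T, ∀ t ∈ Icc s T, K t * K s = K s * K t := by
    intro s hs
    set B := K s with hB_def
    have hCB : C * B = B * C := (part1 s hs).symm
    have hf' : ∀ t ∈ Ico s T,
        HasDerivWithinAt (fun u => K u * B - B * K u)
          (v t (K t * B - B * K t)) (Ici t) t := by
      intro t ht
      have htIcc : t ∈ Icc (0 : ℝ) T := ⟨hs.1.trans ht.1, ht.2.le⟩
      have hd := (hφder B t htIcc).mono_of_mem_nhdsWithin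
        (Icc_mem_nhdsGE_of_mem ⟨hs.1.trans ht.1, ht.2⟩)
      have hval : v t (K t * B - B * K t) =
          (-2 : ℝ) • (K t * (K t * B - B * K t) + (K t * B - B * K t) * K t) := by
        simp only [hv_def, hKc_eq t htIcc]
      rw [comm_aux (K t) B C hCB, ← hval] at hd
      exact hd
    have hg' : ∀ t ∈ Ico s T,
        HasDerivWithinAt (fun _ : ℝ => (0 : Matrix (Fin d) (Fin d) ℝ))
          (v t ((fun _ : ℝ => (0 : Matrix (Fin d) (Fin d) ℝ)) t)) (Ici t) t := by
      intro t ht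
      have : v t (0 : Matrix (Fin d) (Fin d) ℝ) = 0 := by simp [hv_def]
      rw [this]
      exact hasDerivWithinAt_const _ _ _
    have ha : K s * B - B * K s = (0 : Matrix (Fin d) (Fin d) ℝ) := by
      rw [hB_def]; abel
    have hsub : Icc s T ⊆ Icc (0 : ℝ) T := Icc_subset_Icc hs.1 le_rfl
    have heq := ODE_solution_unique_of_mem_Icc_right (fun t _ => hlip t) ((hφcont B).mono hsub) hf'
      (fun _ _ => trivial) continuousOn_const hg' (fun _ _ => trivial) ha
    intro t ht
    have := heq ht
    simpa [sub_eq_zero] using this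
  refine ⟨part1, fun s hs t ht => ?_⟩
  rcases le_total s t with h | h
  · exact key s hs t ⟨h, ht.2⟩
  · exact (key t ht s ⟨h, hs.2⟩).symm

end Stmt5Aux
end

section
/- Let (Ω, 𝔉, ℙ) be a probability space, E₀ : Ω → ℝ^m a random vector, and G_i, G_j square-integrable centered real random variables with the pair (G_i, G_j) independent of E₀ and Cov(G_i, G_j) = (t' − t)·Σ_{ij}, where 0 ≤ t < t' ≤ T. Let μ^i, μ^j : [0,T] × ℝ^m → ℝ be jointly measurable with |μ^i| ≤ M_i and |μ^j| ≤ M_j everywhere, and set X := G_i + α_i·∫_t^{t'} μ^i(s, E₀) ds and Y := G_j + α_j·∫_t^{t'} μ^j(s, E₀) ds for constants α_i, α_j ≥ 0. Then |Cov(X, Y) − (t' − t)·Σ_{ij}| ≤ 2·α_i·α_j·M_i·M_j·(t' − t)². In particular, (t' − t)^{−1}·Cov(X, Y) → Σ_{ij} as t' → t. -/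
open MeasureTheory ProbabilityTheory intervalIntegral

/-- The covariance of two real random variables. -/
noncomputable def cov {Ω : Type*} [MeasurableSpace Ω] (μ : Measure Ω) (X Y : Ω → ℝ) : ℝ :=
  (∫ ω, X ω * Y ω ∂μ) - (∫ ω, X ω ∂μ) * (∫ ω, Y ω ∂μ)

/-- **The excess covariance over a bin is of second order in the bin length
(asymptotic (3.4)).** If the centered square-integrable pair `(G_i, G_j)` is independent
of `E₀`, `Cov(G_i, G_j) = (t' − t)·Σ_{ij}`, the trading speeds `μ^i, μ^j` are jointly
measurable and bounded by `M_i, M_j`, and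
`X = G_i + α_i·∫_t^{t'} μ^i(s, E₀) ds`, `Y = G_j + α_j·∫_t^{t'} μ^j(s, E₀) ds`
with `α_i, α_j ≥ 0`, then `|Cov(X,Y) − (t'−t)·Σ_{ij}| ≤ 2·α_i·α_j·M_i·M_j·(t'−t)²`. -/
theorem stmt_15 {Ω : Type*} [MeasurableSpace Ω] (μ : Measure Ω) [IsProbabilityMeasure μ]
    (m : ℕ) (E₀ : Ω → (Fin m → ℝ)) (hE₀ : Measurable E₀)
    (Gi Gj : Ω → ℝ) (hGi : Measurable Gi) (hGj : Measurable Gj)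
    (hGi2 : MemLp Gi 2 μ) (hGj2 : MemLp Gj 2 μ)
    (hGicent : ∫ ω, Gi ω ∂μ = 0) (hGjcent : ∫ ω, Gj ω ∂μ = 0)
    (hindep : IndepFun (fun ω => (Gi ω, Gj ω)) E₀ μ)
    (T t t' : ℝ) (ht0 : 0 ≤ t) (htt' : t < t') (ht'T : t' ≤ T)
    (Sij : ℝ) (hcovG : cov μ Gi Gj = (t' - t) * Sij)
    (μi μj : ℝ → (Fin m → ℝ) → ℝ)
    (hμi : Measurable fun p : ℝ × (Fin m → ℝ) => μi p.1 p.2)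
    (hμj : Measurable fun p : ℝ × (Fin m → ℝ) => μj p.1 p.2)
    (Mi Mj : ℝ) (hMi : ∀ s x, |μi s x| ≤ Mi) (hMj : ∀ s x, |μj s x| ≤ Mj)
    (αi αj : ℝ) (hαi : 0 ≤ αi) (hαj : 0 ≤ αj)
    (X Y : Ω → ℝ)
    (hX : X = fun ω => Gi ω + αi * ∫ s in t..t', μi s (E₀ ω))
    (hY : Y = fun ω => Gj ω + αj * ∫ s in t..t', μj s (E₀ ω)) :
    |cov μ X Y - (t' - t) * Sij| ≤ 2 * αi * αj * Mi * Mj * (t' - t) ^ 2 := by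
  have hMi0 : 0 ≤ Mi := le_trans (abs_nonneg _) (hMi t (fun _ => 0))
  have hMj0 : 0 ≤ Mj := le_trans (abs_nonneg _) (hMj t (fun _ => 0))
  have htle : t ≤ t' := htt'.le
  -- the drift functions
  set Fi : (Fin m → ℝ) → ℝ := fun x => αi * ∫ s in t..t', μi s x with hFidef
  set Fj : (Fin m → ℝ) → ℝ := fun x => αj * ∫ s in t..t', μj s x with hFjdef
  -- measurability of Fi, Fj
  have hFi : Measurable Fi := by
    have h1 : StronglyMeasurable fun x : Fin m → ℝ =>
        ∫ s in Set.Ioc t t', μi s x ∂(volume : Measure ℝ) :=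
      (hμi.comp measurable_swap).stronglyMeasurable.integral_prod_right'
    have : Measurable fun x : Fin m → ℝ => ∫ s in t..t', μi s x := by
      have := h1.measurable
      simpa [intervalIntegral.integral_of_le htle] using this
    exact measurable_const.mul this
  have hFj : Measurable Fj := by
    have h1 : StronglyMeasurable fun x : Fin m → ℝ =>
        ∫ s in Set.Ioc t t', μj s x ∂(volume : Measure ℝ) :=
      (hμj.comp measurable_swap).stronglyMeasurable.integral_prod_right'
    have : Measurable fun x : Fin m → ℝ => ∫ s in t..t', μj s x := by
      have := h1.measurable
      simpa [intervalIntegral.integral_of_le htle] using this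
    exact measurable_const.mul this
  -- bounds on Fi, Fj
  have hFibd : ∀ x, |Fi x| ≤ αi * Mi * (t' - t) := by
    intro x
    have h1 : ‖∫ s in t..t', μi s x‖ ≤ Mi * |t' - t| :=
      intervalIntegral.norm_integral_le_of_norm_le_const fun s _ => by
        simpa using hMi s x
    have h2 : |t' - t| = t' - t := abs_of_nonneg (by linarith)
    calc |Fi x| = αi * |∫ s in t..t', μi s x| := by
          rw [abs_mul, abs_of_nonneg hαi]
      _ ≤ αi * (Mi * (t' - t)) := by
          apply mul_le_mul_of_nonneg_left _ hαi
          simpa [h2] using h1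
      _ = αi * Mi * (t' - t) := by ring
  have hFjbd : ∀ x, |Fj x| ≤ αj * Mj * (t' - t) := by
    intro x
    have h1 : ‖∫ s in t..t', μj s x‖ ≤ Mj * |t' - t| :=
      intervalIntegral.norm_integral_le_of_norm_le_const fun s _ => by
        simpa using hMj s x
    have h2 : |t' - t| = t' - t := abs_of_nonneg (by linarith)
    calc |Fj x| = αj * |∫ s in t..t', μj s x| := by
          rw [abs_mul, abs_of_nonneg hαj]
      _ ≤ αj * (Mj * (t' - t)) := by
          apply mul_le_mul_of_nonneg_left _ hαj
          simpa [h2] using h1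
      _ = αj * Mj * (t' - t) := by ring
  set A : Ω → ℝ := fun ω => Fi (E₀ ω) with hAdef
  set B : Ω → ℝ := fun ω => Fj (E₀ ω) with hBdef
  have hAmeas : Measurable A := hFi.comp hE₀
  have hBmeas : Measurable B := hFj.comp hE₀
  have hAbd : ∀ ω, ‖A ω‖ ≤ αi * Mi * (t' - t) := fun ω => hFibd (E₀ ω)
  have hBbd : ∀ ω, ‖B ω‖ ≤ αj * Mj * (t' - t) := fun ω => hFjbd (E₀ ω)
  -- integrability
  have hGiInt : Integrable Gi μ := hGi2.integrable (by norm_num)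
  have hGjInt : Integrable Gj μ := hGj2.integrable (by norm_num)
  have hAInt : Integrable A μ :=
    (integrable_const (αi * Mi * (t' - t))).mono'
      hAmeas.aestronglyMeasurable (Filter.Eventually.of_forall hAbd)
  have hBInt : Integrable B μ :=
    (integrable_const (αj * Mj * (t' - t))).mono'
      hBmeas.aestronglyMeasurable (Filter.Eventually.of_forall hBbd)
  have hGiGjInt : Integrable (fun ω => Gi ω * Gj ω) μ := by
    have := hGi2.smul (p := 2) (q := 2) (r := 1) hGj2
    rw [memLp_one_iff_integrable] at this
    exact this.congr (Filter.Eventually.of_forall fun ω => by simp [smul_eq_mul, mul_comm])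
  have hGiBInt : Integrable (fun ω => Gi ω * B ω) μ := by
    have := hGjInt  -- dummy
    exact (Integrable.bdd_mul hGiInt hBmeas.aestronglyMeasurable
      (Filter.Eventually.of_forall hBbd)).congr (Filter.Eventually.of_forall fun ω => mul_comm _ _)
  have hAGjInt : Integrable (fun ω => A ω * Gj ω) μ :=
    Integrable.bdd_mul hGjInt hAmeas.aestronglyMeasurable (Filter.Eventually.of_forall hAbd)
  have hABInt : Integrable (fun ω => A ω * B ω) μ :=
    Integrable.bdd_mul hBInt hAmeas.aestronglyMeasurable (Filter.Eventually.of_forall hAbd)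
  -- independence consequences
  have hGiB : IndepFun Gi B μ := by
    have := hindep.comp (φ := Prod.fst) (ψ := Fj) measurable_fst hFj
    exact this
  have hAGj : IndepFun A Gj μ := by
    have := (hindep.symm).comp (φ := Fi) (ψ := Prod.snd) hFi measurable_snd
    exact this
  have hGiBzero : (∫ ω, Gi ω * B ω ∂μ) = 0 := by
    rw [hGiB.integral_fun_mul_eq_mul_integral hGi.aestronglyMeasurable hBmeas.aestronglyMeasurable,
      hGicent, zero_mul]
  have hAGjzero : (∫ ω, A ω * Gj ω ∂μ) = 0 := by
    rw [hAGj.integral_fun_mul_eq_mul_integral hAmeas.aestronglyMeasurable hGj.aestronglyMeasurable,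
      hGjcent, mul_zero]
  -- expand the covariance
  have hXeq : X = fun ω => Gi ω + A ω := hX
  have hYeq : Y = fun ω => Gj ω + B ω := hY
  have hEX : (∫ ω, X ω ∂μ) = ∫ ω, A ω ∂μ := by
    rw [hXeq, integral_add hGiInt hAInt, hGicent, zero_add]
  have hEY : (∫ ω, Y ω ∂μ) = ∫ ω, B ω ∂μ := by
    rw [hYeq, integral_add hGjInt hBInt, hGjcent, zero_add]
  have hEXY : (∫ ω, X ω * Y ω ∂μ)
      = (∫ ω, Gi ω * Gj ω ∂μ) + (∫ ω, A ω * B ω ∂μ) := by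
    rw [hXeq, hYeq]
    have heq : (fun ω => (Gi ω + A ω) * (Gj ω + B ω))
        = fun ω => (Gi ω * Gj ω + Gi ω * B ω) + (A ω * Gj ω + A ω * B ω) := by
      funext ω; ring
    have h1 : Integrable (fun ω => Gi ω * Gj ω + Gi ω * B ω) μ := hGiGjInt.add hGiBInt
    have h2 : Integrable (fun ω => A ω * Gj ω + A ω * B ω) μ := hAGjInt.add hABInt
    rw [heq, integral_add h1 h2, integral_add hGiGjInt hGiBInt,
      integral_add hAGjInt hABInt, hGiBzero, hAGjzero]
    ring
  have hcovexp : cov μ X Y - (t' - t) * Sij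
      = (∫ ω, A ω * B ω ∂μ) - (∫ ω, A ω ∂μ) * (∫ ω, B ω ∂μ) := by
    have hG : (∫ ω, Gi ω * Gj ω ∂μ) = (t' - t) * Sij := by
      have := hcovG
      rw [cov, hGicent, zero_mul, sub_zero] at this
      exact this
    rw [cov, hEXY, hEX, hEY, hG]
    ring
  rw [hcovexp]
  -- the bounds
  have hCA : 0 ≤ αi * Mi * (t' - t) :=
    mul_nonneg (mul_nonneg hαi hMi0) (by linarith)
  have hCB : 0 ≤ αj * Mj * (t' - t) :=
    mul_nonneg (mul_nonneg hαj hMj0) (by linarith)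
  have hEA : |∫ ω, A ω ∂μ| ≤ αi * Mi * (t' - t) := by
    have := MeasureTheory.norm_integral_le_of_norm_le_const (μ := μ)
      (Filter.Eventually.of_forall hAbd)
    simpa using this
  have hEB : |∫ ω, B ω ∂μ| ≤ αj * Mj * (t' - t) := by
    have := MeasureTheory.norm_integral_le_of_norm_le_const (μ := μ)
      (Filter.Eventually.of_forall hBbd)
    simpa using this
  have hEAB : |∫ ω, A ω * B ω ∂μ| ≤ (αi * Mi * (t' - t)) * (αj * Mj * (t' - t)) := by
    have hb : ∀ ω, ‖A ω * B ω‖ ≤ (αi * Mi * (t' - t)) * (αj * Mj * (t' - t)) := fun ω => by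
      rw [norm_mul]
      exact mul_le_mul (hAbd ω) (hBbd ω) (norm_nonneg _) hCA
    have := MeasureTheory.norm_integral_le_of_norm_le_const (μ := μ)
      (Filter.Eventually.of_forall hb)
    simpa using this
  calc |(∫ ω, A ω * B ω ∂μ) - (∫ ω, A ω ∂μ) * (∫ ω, B ω ∂μ)|
      ≤ |∫ ω, A ω * B ω ∂μ| + |(∫ ω, A ω ∂μ) * (∫ ω, B ω ∂μ)| := abs_sub _ _
    _ ≤ (αi * Mi * (t' - t)) * (αj * Mj * (t' - t))
        + (αi * Mi * (t' - t)) * (αj * Mj * (t' - t)) := by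
        gcongr
        rw [abs_mul]
        exact mul_le_mul hEA hEB (abs_nonneg _) hCA
    _ = 2 * αi * αj * Mi * Mj * (t' - t) ^ 2 := by ring
end
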